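/- For each criticality level ℓ ∈ {1,…,L}, the quantity Σ_{i: X_i ≥ ℓ} p_i^(ℓ) is a lower bound on the makespan of any feasible schedule of a set of F-shaped tasks. -/

import Mathlib

/-- Feasibility of a schedule of F-shaped tasks. -/
def Feasible {ι : Type*} (X : ι → ℕ) (p : ι → ℕ → ℕ) (s : ι → ℕ) : Prop :=
  ∀ i j, i ≠ j →
    s i + p i (min (X i) (X j)) ≤ s j ∨ s j + p j (min (X i) (X j)) ≤ s i

/-- Makespan of a schedule. -/
def makespan {ι : Type*} [Fintype ι] (X : ι → ℕ) (p : ι → ℕ → ℕ) (s : ι → ℕ) : ℕ :=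
  Finset.univ.sup fun i => s i + p i (X i)

/-- A valid set of F-shaped tasks with criticalities in {1,…,L} and strictly
increasing processing times on levels 1..X i. -/
def ValidInstance {ι : Type*} (L : ℕ) (X : ι → ℕ) (p : ι → ℕ → ℕ) : Prop :=
  ∀ i, 1 ≤ X i ∧ X i ≤ L ∧ StrictMonoOn (p i) (Set.Icc 1 (X i))

/-- each level-wise sum Σ_{i : X_i ≥ ℓ} p_i^(ℓ) lower-bounds the
makespan of every feasible schedule. -/
theorem stmt1 (n L : ℕ) (X : Fin n → ℕ) (p : Fin n → ℕ → ℕ)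
    (hI : ValidInstance L X p) (s : Fin n → ℕ) (hs : Feasible X p s)
    (ℓ : ℕ) (hℓ : ℓ ∈ Finset.Icc 1 L) :
    ∑ i ∈ Finset.univ.filter fun i => ℓ ≤ X i, p i ℓ ≤ makespan X p s := by
  obtain ⟨hℓ1, _⟩ := Finset.mem_Icc.mp hℓ
  have mono : ∀ i a b, 1 ≤ a → a ≤ b → b ≤ X i → p i a ≤ p i b := by
    intro i a b ha hab hb
    exact (hI i).2.2.monotoneOn ⟨ha, le_trans hab hb⟩ ⟨le_trans ha hab, hb⟩ hab
  have key : ∀ S : Finset (Fin n), (∀ i ∈ S, ℓ ≤ X i) →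
      ∑ i ∈ S, p i ℓ ≤ S.sup (fun i => s i + p i ℓ) := by
    intro S
    induction S using Finset.strongInduction with
    | _ S ih =>
      intro hS
      rcases S.eq_empty_or_nonempty with rfl | hne
      · simp
      obtain ⟨i, hiS, hmax⟩ := Finset.exists_max_image S (fun i => toLex (s i, p i ℓ)) hne
      have hb : ∀ j ∈ S.erase i, s j + p j ℓ ≤ s i := by
        intro j hj
        have hji : j ≠ i := Finset.ne_of_mem_erase hj
        have hjS := Finset.mem_of_mem_erase hj
        have hm := hmax j hjS
        rw [Prod.Lex.le_iff] at hm
        have hsj : s j ≤ s i := by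
          rcases hm with h | ⟨h, _⟩
          · exact h.le
          · exact h.le
        have hℓm : ℓ ≤ min (X j) (X i) := le_min (hS j hjS) (hS i hiS)
        rcases hs j i hji with h | h
        · have hmono := mono j ℓ (min (X j) (X i)) hℓ1 hℓm (min_le_left _ _)
          omega
        · have h0 : p i (min (X j) (X i)) = 0 := by omega
          have hsji : s j = s i := by omega
          have hpi : p i ℓ = 0 := by
            have := mono i ℓ _ hℓ1 hℓm (min_le_right _ _)
            omega
          have hpj : p j ℓ = 0 := by
            rcases hm with h' | ⟨_, h'⟩ <;> simp only [ofLex_toLex] at h' <;> omega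
          omega
      have h1 : ∑ j ∈ S.erase i, p j ℓ ≤ s i := by
        calc ∑ j ∈ S.erase i, p j ℓ ≤ (S.erase i).sup (fun j => s j + p j ℓ) :=
              ih _ (Finset.erase_ssubset hiS) (fun j hj => hS j (Finset.mem_of_mem_erase hj))
          _ ≤ s i := Finset.sup_le hb
      calc ∑ j ∈ S, p j ℓ = p i ℓ + ∑ j ∈ S.erase i, p j ℓ :=
            (Finset.add_sum_erase S _ hiS).symm
        _ ≤ p i ℓ + s i := by omega
        _ ≤ S.sup (fun i => s i + p i ℓ) := by
            rw [add_comm]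
            exact Finset.le_sup (f := fun i => s i + p i ℓ) hiS
  calc ∑ i ∈ Finset.univ.filter (fun i => ℓ ≤ X i), p i ℓ
      ≤ (Finset.univ.filter (fun i => ℓ ≤ X i)).sup (fun i => s i + p i ℓ) :=
        key _ (fun i hi => (Finset.mem_filter.mp hi).2)
    _ ≤ makespan X p s := by
        apply Finset.sup_le
        intro i hi
        have h2 : p i ℓ ≤ p i (X i) := mono i ℓ (X i) hℓ1 (Finset.mem_filter.mp hi).2 le_rfl
        have h3 : s i + p i (X i) ≤ makespan X p s :=
          Finset.le_sup (f := fun j => s j + p j (X j)) (Finset.mem_univ i)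
        omega
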